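/- Let R be a unital ring and let n be a nonempty finite index type. Then R is GCR if and only if the matrix ring of n-by-n matrices over R is GCR. -/

import Mathlib

universe u v w w'

/-- A ring is (left) primitive if it admits a faithful simple left module. -/
def IsPrimitiveRing (R : Type u) [Ring R] : Prop :=
  ∃ (M : Type u) (_ : AddCommGroup M) (_ : Module R M), IsSimpleModule R M ∧ FaithfulSMul R M

/-- A ring has a minimal left ideal if there is an atom in its lattice of left ideals. -/
def HasMinimalLeftIdeal (R : Type u) [Ring R] : Prop :=
  ∃ L : Submodule R R, IsAtom L

/-- A ring is GCR if every primitive quotient has a minimal left ideal. -/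
def IsGCRRing (R : Type u) [Ring R] : Prop :=
  ∀ P : TwoSidedIdeal R, IsPrimitiveRing P.ringCon.Quotient →
    HasMinimalLeftIdeal P.ringCon.Quotient

set_option linter.unusedSectionVars false
set_option synthInstance.maxHeartbeats 1000000
set_option maxHeartbeats 1000000

/-- A module is simple iff it is nontrivial and every nonzero element generates it. -/
lemma gcr_simple_iff_cyclic {S : Type w} [Ring S] {M : Type w'} [AddCommGroup M]
    [Module S M] :
    IsSimpleModule S M ↔ (∃ x : M, x ≠ 0) ∧ ∀ x : M, x ≠ 0 → ∀ y : M, ∃ s : S, s • x = y := by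
  constructor
  · intro h
    have : Nontrivial M := IsSimpleModule.nontrivial S M
    obtain ⟨x, hx⟩ := exists_ne (0 : M)
    refine ⟨⟨x, hx⟩, fun x hx y => ?_⟩
    have hs : (Submodule.span S {x}) = ⊤ := by
      rcases h.1.2 (Submodule.span S {x}) with h1 | h1
      · have hxm := Submodule.mem_span_singleton_self (R := S) x
        rw [h1] at hxm
        simp at hxm
        exact absurd hxm hx
      · exact h1
    have : y ∈ Submodule.span S {x} := hs ▸ Submodule.mem_top
    simpa [eq_comm] using Submodule.mem_span_singleton.mp this
  · rintro ⟨⟨x0, hx0⟩, hc⟩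
    have hnt : Nontrivial (Submodule S M) := by
      refine ⟨⊥, ⊤, fun h => hx0 ?_⟩
      have : x0 ∈ (⊥ : Submodule S M) := h ▸ Submodule.mem_top
      simpa using this
    refine (isSimpleModule_iff S M).mpr ⟨fun W => ?_⟩
    by_cases hW : W = ⊥
    · exact Or.inl hW
    · refine Or.inr (eq_top_iff.mpr fun y _ => ?_)
      obtain ⟨x, hxW, hx⟩ := Submodule.exists_mem_ne_zero_of_ne_bot hW
      obtain ⟨s, hs⟩ := hc x hx y
      exact hs ▸ W.smul_mem s hxW

/-- From a simple faithful module in any universe, conclude primitivity. -/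
lemma isPrimitiveRing_of_module {S : Type w} [Ring S] (M : Type w') [AddCommGroup M]
    [Module S M] (hs : IsSimpleModule S M) (hf : FaithfulSMul S M) :
    IsPrimitiveRing S := by
  obtain ⟨⟨m0, hm0⟩, hc⟩ := gcr_simple_iff_cyclic.mp hs
  set f := LinearMap.toSpanSingleton S M m0 with hfdef
  refine ⟨S ⧸ LinearMap.ker f, inferInstance, inferInstance, ?_, ?_⟩
  · rw [gcr_simple_iff_cyclic]
    constructor
    · refine ⟨Submodule.Quotient.mk 1, fun h => hm0 ?_⟩
      rw [Submodule.Quotient.mk_eq_zero, LinearMap.mem_ker] at h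
      simpa [hfdef, LinearMap.toSpanSingleton_apply] using h
    · intro x hx y
      obtain ⟨a, rfl⟩ := Submodule.Quotient.mk_surjective _ x
      obtain ⟨b, rfl⟩ := Submodule.Quotient.mk_surjective _ y
      have ha : a • m0 ≠ 0 := by
        intro h
        apply hx
        rw [Submodule.Quotient.mk_eq_zero, LinearMap.mem_ker]
        simpa [hfdef, LinearMap.toSpanSingleton_apply] using h
      obtain ⟨s, hs'⟩ := hc (a • m0) ha (b • m0)
      refine ⟨s, ?_⟩
      rw [← Submodule.Quotient.mk_smul, Submodule.Quotient.eq]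
      rw [LinearMap.mem_ker]
      simp only [hfdef, map_sub, LinearMap.toSpanSingleton_apply]
      rw [smul_eq_mul, mul_smul, hs', sub_self]
  · refine ⟨fun {r₁ r₂} h => hf.eq_of_smul_eq_smul (α := M) fun m => ?_⟩
    obtain ⟨a, ha⟩ := hc m0 hm0 m
    have := h (Submodule.Quotient.mk a)
    rw [← Submodule.Quotient.mk_smul, ← Submodule.Quotient.mk_smul,
      Submodule.Quotient.eq, LinearMap.mem_ker] at this
    simp only [hfdef, map_sub, LinearMap.toSpanSingleton_apply, sub_eq_zero] at this
    rw [smul_eq_mul, smul_eq_mul] at this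
    calc r₁ • m = r₁ • a • m0 := by rw [ha]
    _ = (r₁ * a) • m0 := (mul_smul _ _ _).symm
    _ = (r₂ * a) • m0 := this
    _ = r₂ • m := by rw [mul_smul, ha]

/-- Elementwise characterization of having a minimal left ideal. -/
lemma gcr_hml_iff {S : Type w} [Ring S] :
    HasMinimalLeftIdeal S ↔
      ∃ x : S, x ≠ 0 ∧ ∀ s : S, s * x ≠ 0 → ∃ t : S, t * (s * x) = x := by
  constructor
  · rintro ⟨L, hL⟩
    obtain ⟨x, hxL, hx⟩ := Submodule.exists_mem_ne_zero_of_ne_bot hL.1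
    have key : ∀ y : S, y ∈ L → y ≠ 0 → Submodule.span S {y} = L := by
      intro y hyL hy
      have hle : Submodule.span S {y} ≤ L := Submodule.span_le.mpr (by simpa using hyL)
      rcases lt_or_eq_of_le hle with h | h
      · have hym := Submodule.mem_span_singleton_self (R := S) y
        rw [hL.2 _ h] at hym
        simp at hym
        exact absurd hym hy
      · exact h
    refine ⟨x, hx, fun s hsx => ?_⟩
    have hsxL : s * x ∈ L := by simpa [smul_eq_mul] using L.smul_mem s hxL
    have : x ∈ Submodule.span S {s * x} := (key _ hsxL hsx).symm ▸ hxL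
    obtain ⟨t, ht⟩ := Submodule.mem_span_singleton.mp this
    exact ⟨t, by simpa [smul_eq_mul] using ht⟩
  · rintro ⟨x, hx, hrec⟩
    refine ⟨Submodule.span S {x}, ⟨fun hb => hx ?_, fun W hW => ?_⟩⟩
    · have hxm := Submodule.mem_span_singleton_self (R := S) x
      rw [hb] at hxm
      simpa using hxm
    · by_contra hWb
      obtain ⟨y, hyW, hy⟩ := Submodule.exists_mem_ne_zero_of_ne_bot hWb
      obtain ⟨s, hs⟩ := Submodule.mem_span_singleton.mp (hW.le hyW)
      rw [smul_eq_mul] at hs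
      obtain ⟨t, ht⟩ := hrec s (hs.symm ▸ hy)
      have hxW : x ∈ W := by
        have h2 := W.smul_mem t hyW
        rw [smul_eq_mul] at h2
        rw [hs] at ht
        exact ht ▸ h2
      exact absurd (Submodule.span_le.mpr (by simpa using hxW)) (not_le_of_gt hW)

lemma isPrimitiveRing_of_ringEquiv {A : Type w} {B : Type w'} [Ring A] [Ring B]
    (e : A ≃+* B) (h : IsPrimitiveRing B) : IsPrimitiveRing A := by
  obtain ⟨M, _, _, hs, hf⟩ := h
  letI : Module A M := Module.compHom M (e : A →+* B)
  have smul_def : ∀ (a : A) (m : M), a • m = e a • m := fun a m => rfl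
  refine isPrimitiveRing_of_module M ?_ ?_
  · rw [gcr_simple_iff_cyclic]
    obtain ⟨hne, hc⟩ := gcr_simple_iff_cyclic.mp hs
    refine ⟨hne, fun x hx y => ?_⟩
    obtain ⟨b, hb⟩ := hc x hx y
    exact ⟨e.symm b, by rw [smul_def, e.apply_symm_apply, hb]⟩
  · refine ⟨fun {a₁ a₂} h => e.injective (hf.eq_of_smul_eq_smul fun m => ?_)⟩
    rw [← smul_def, ← smul_def]
    exact h m

lemma hml_of_ringEquiv {A : Type w} {B : Type w'} [Ring A] [Ring B]
    (e : A ≃+* B) (h : HasMinimalLeftIdeal B) : HasMinimalLeftIdeal A := by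
  rw [gcr_hml_iff] at h ⊢
  obtain ⟨x, hx, hrec⟩ := h
  refine ⟨e.symm x, fun h0 => hx (by simpa using congrArg e h0), fun s hs => ?_⟩
  have hsx : e s * x ≠ 0 := by
    intro h0
    apply hs
    have : e (s * e.symm x) = 0 := by simpa [map_mul] using h0
    simpa using congrArg e.symm this
  obtain ⟨t, ht⟩ := hrec (e s) hsx
  refine ⟨e.symm t, e.injective ?_⟩
  simp only [map_mul, e.apply_symm_apply]
  exact ht

section Matrix
variable {S : Type w} [Ring S] {n : Type v} [Fintype n] [DecidableEq n] [Nonempty n]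

lemma hml_matrix_up (h : HasMinimalLeftIdeal S) : HasMinimalLeftIdeal (Matrix n n S) := by
  rw [gcr_hml_iff] at h ⊢
  obtain ⟨x, hx, hrec⟩ := h
  obtain ⟨i₀⟩ := ‹Nonempty n›
  refine ⟨Matrix.single i₀ i₀ x, ?_, ?_⟩
  · intro h0
    exact hx (by simpa using congrFun (congrFun h0 i₀) i₀)
  · intro B hB
    have hBX : ∀ i j, (B * Matrix.single i₀ i₀ x) i j
        = if j = i₀ then B i i₀ * x else 0 := by
      intro i j
      by_cases hj : j = i₀
      · subst hj; simp
      · simp [hj]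
    have : ∃ k, B k i₀ * x ≠ 0 := by
      by_contra hall
      push_neg at hall
      apply hB
      ext i j
      rw [hBX]
      by_cases hj : j = i₀ <;> simp [hj, hall]
    obtain ⟨k, hk⟩ := this
    obtain ⟨t, ht⟩ := hrec (B k i₀) hk
    refine ⟨Matrix.single i₀ k t, ?_⟩
    ext i j
    by_cases hi : i = i₀
    · rw [hi, Matrix.single_mul_apply_same, hBX]
      by_cases hj : j = i₀
      · rw [hj, if_pos rfl, ht, Matrix.single_apply_same]
      · rw [if_neg hj, mul_zero, Matrix.single_apply_of_ne i₀ i₀ x i₀ j (by tauto)]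
    · rw [Matrix.single_mul_apply_of_ne t i₀ k i j hi,
        Matrix.single_apply_of_ne i₀ i₀ x i j (by tauto)]

lemma hml_matrix_down (h : HasMinimalLeftIdeal (Matrix n n S)) : HasMinimalLeftIdeal S := by
  rw [gcr_hml_iff] at h ⊢
  obtain ⟨X, hX, hrec⟩ := h
  have : ∃ k l, X k l ≠ 0 := by
    by_contra hall
    push_neg at hall
    exact hX (by ext i j; simp [hall])
  obtain ⟨k, l, hx⟩ := this
  refine ⟨X k l, hx, fun s hs => ?_⟩
  have hBX : Matrix.single k k s * X ≠ 0 := by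
    intro h0
    apply hs
    have := congrFun (congrFun h0 k) l
    simpa using this
  obtain ⟨T, hT⟩ := hrec _ hBX
  refine ⟨T k k, ?_⟩
  have := congrFun (congrFun hT k) l
  rw [← mul_assoc] at this
  have hTB : ∀ j, (T * Matrix.single k k s) k j = if j = k then T k k * s else 0 := by
    intro j
    by_cases hj : j = k
    · subst hj; simp
    · simp [hj]
  rw [Matrix.mul_apply] at this
  simp only [hTB, ite_mul, zero_mul] at this
  rw [Finset.sum_ite_eq' Finset.univ k (fun j => (T k k * s) * X j l)] at this
  simp only [Finset.mem_univ, if_true] at this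
  rw [mul_assoc] at this
  rw [← mul_assoc, mul_assoc]
  exact this
end Matrix

section MatMod
variable {S : Type w} {n : Type v} [Ring S] [Fintype n] [DecidableEq n]
variable {M : Type w'} [AddCommGroup M] [Module S M]

def gcrMatModule : Module (Matrix n n S) (n → M) :=
  letI smul : SMul (Matrix n n S) (n → M) := ⟨fun A v i => ∑ j, A i j • v j⟩
  letI ma : MulAction (Matrix n n S) (n → M) :=
  { one_smul := fun v => funext fun i => by
      show (∑ j, (1 : Matrix n n S) i j • v j) = v i
      simp [Matrix.one_apply, ite_smul]
    mul_smul := fun A B v => funext fun i => by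
      show (∑ j, (A * B) i j • v j) = ∑ k, A i k • ∑ j, B k j • v j
      simp only [Matrix.mul_apply, Finset.sum_smul, Finset.smul_sum, mul_smul]
      exact Finset.sum_comm }
  letI da : DistribMulAction (Matrix n n S) (n → M) :=
  { smul_zero := fun A => funext fun i => by
      show (∑ j, A i j • (0 : M)) = 0
      simp
    smul_add := fun A v w => funext fun i => by
      show (∑ j, A i j • (v j + w j)) = (∑ j, A i j • v j) + ∑ j, A i j • w j
      simp [smul_add, Finset.sum_add_distrib] }
  { add_smul := fun A B v => funext fun i => by
      show (∑ j, (A + B) i j • v j) = (∑ j, A i j • v j) + ∑ j, B i j • v j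
      simp [Matrix.add_apply, add_smul, Finset.sum_add_distrib]
    zero_smul := fun v => funext fun i => by
      show (∑ j, (0 : Matrix n n S) i j • v j) = 0
      simp }

end MatMod

section MatHelpers
variable {S : Type w} {n : Type v} [Ring S] [Fintype n] [DecidableEq n]

lemma gcr_EAE (i₀ : n) (A : Matrix n n S) :
    Matrix.single i₀ i₀ (1 : S) * A * Matrix.single i₀ i₀ 1 =
      Matrix.single i₀ i₀ (A i₀ i₀) := by
  ext a b
  by_cases hb : b = i₀
  · rw [hb, Matrix.mul_single_apply_same (1 : S) i₀ i₀ a, mul_one]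
    by_cases ha : a = i₀
    · rw [ha, Matrix.single_mul_apply_same (1 : S) i₀ i₀ i₀, one_mul,
        Matrix.single_apply_same]
    · rw [Matrix.single_mul_apply_of_ne (1 : S) i₀ i₀ a i₀ ha,
        Matrix.single_apply_of_ne i₀ i₀ _ a i₀ (by tauto)]
  · rw [Matrix.mul_single_apply_of_ne (1 : S) i₀ i₀ a b hb,
      Matrix.single_apply_of_ne i₀ i₀ _ a b (by tauto)]

lemma gcr_scalarE (i₀ : n) (s : S) :
    Matrix.scalar n s * Matrix.single i₀ i₀ (1 : S) =
      Matrix.single i₀ i₀ s := by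
  ext i j
  rw [Matrix.scalar_apply, Matrix.diagonal_mul]
  simp only [Matrix.single, Matrix.of_apply]
  split <;> simp

lemma gcr_Escalar (i₀ : n) (s : S) :
    Matrix.single i₀ i₀ (1 : S) * Matrix.scalar n s =
      Matrix.single i₀ i₀ s := by
  ext i j
  rw [Matrix.scalar_apply, Matrix.mul_diagonal]
  simp only [Matrix.single, Matrix.of_apply]
  split <;> simp

end MatHelpers

section MatPrim
variable {S : Type w} {n : Type v} [Ring S] [Fintype n] [DecidableEq n] [Nonempty n]

lemma prim_matrix_up (h : IsPrimitiveRing S) : IsPrimitiveRing (Matrix n n S) := by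
  obtain ⟨M, _, _, hs, hf⟩ := h
  letI := gcrMatModule (S := S) (n := n) (M := M)
  obtain ⟨⟨m0, hm0⟩, hc⟩ := gcr_simple_iff_cyclic.mp hs
  refine isPrimitiveRing_of_module (n → M) ?_ ?_
  · rw [gcr_simple_iff_cyclic]
    constructor
    · obtain ⟨i₀⟩ := ‹Nonempty n›
      exact ⟨fun _ => m0, fun h0 => hm0 (congrFun h0 i₀)⟩
    · intro v hv w
      have : ∃ k, v k ≠ 0 := by
        by_contra hall
        push_neg at hall
        exact hv (funext hall)
      obtain ⟨k, hk⟩ := this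
      choose f hf' using fun i => hc (v k) hk (w i)
      refine ⟨Matrix.of fun i j => if j = k then f i else 0, funext fun i => ?_⟩
      show (∑ j, (if j = k then f i else 0) • v j) = w i
      simp only [ite_smul, zero_smul]
      rw [Finset.sum_ite_eq' Finset.univ k (fun j => f i • v j)]
      simp [hf']
  · refine ⟨fun {A B} h => ?_⟩
    ext i j
    refine hf.eq_of_smul_eq_smul (α := M) fun m => ?_
    set v : n → M := Pi.single j m with hv
    have := congrFun (h v) i
    have lhs : ∀ C : Matrix n n S, (C • v) i = C i j • m := by
      intro C
      show (∑ j', C i j' • v j') = C i j • m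
      have : ∀ j', C i j' • v j' = if j' = j then C i j' • m else 0 := by
        intro j'
        by_cases hj : j' = j
        · subst hj; simp [hv]
        · simp [hv, Pi.single_apply, hj]
      rw [Finset.sum_congr rfl fun j' _ => this j']
      rw [Finset.sum_ite_eq' Finset.univ j (fun j' => C i j' • m)]
      simp
    rw [lhs A, lhs B] at this
    exact this

lemma prim_matrix_down (h : IsPrimitiveRing (Matrix n n S)) : IsPrimitiveRing S := by
  obtain ⟨N, _, _, hs, hfN⟩ := h
  obtain ⟨i₀⟩ := ‹Nonempty n›
  set E : Matrix n n S := Matrix.single i₀ i₀ 1 with hE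
  have hEE : E * E = E := by
    rw [hE, Matrix.single_mul_single_same, one_mul]
  letI : Module S N := Module.compHom N ((Matrix.scalar n : S →+* Matrix n n S))
  have smul_def : ∀ (s : S) (z : N), s • z = (Matrix.scalar n s) • z := fun _ _ => rfl
  set Msub : Submodule S N :=
    { carrier := {x | E • x = x}
      add_mem' := fun {a b} ha hb => by
        show E • (a + b) = a + b
        rw [smul_add]
        show E • a + E • b = a + b
        rw [ha, hb]
      zero_mem' := by show E • (0 : N) = 0; rw [smul_zero]
      smul_mem' := fun s x hx => by
        show E • (s • x) = s • x
        rw [smul_def, ← mul_smul, hE, gcr_Escalar, ← gcr_scalarE i₀ s, mul_smul]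
        show Matrix.scalar n s • (E • x) = _
        rw [show E • x = x from hx, ← smul_def] } with hMsub
  -- nontriviality
  have hNnt : Nontrivial N := IsSimpleModule.nontrivial (Matrix n n S) N
  have hMatnt : Nontrivial (Matrix n n S) := by
    refine ⟨0, 1, fun h01 => ?_⟩
    obtain ⟨z, hz⟩ := exists_ne (0 : N)
    exact hz (by calc z = (1 : Matrix n n S) • z := (one_smul _ z).symm
      _ = (0 : Matrix n n S) • z := by rw [h01]
      _ = 0 := zero_smul _ z)
  have hSnt : Nontrivial S := by
    by_contra hS
    rw [not_nontrivial_iff_subsingleton] at hS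
    exact not_subsingleton (Matrix n n S) inferInstance
  have hEne : E ≠ 0 := by
    intro h0
    have := congrFun (congrFun h0 i₀) i₀
    rw [hE, Matrix.single_apply_same] at this
    exact one_ne_zero this
  have hz : ∃ z : N, E • z ≠ 0 := by
    by_contra hall
    push_neg at hall
    refine hEne (hfN.eq_of_smul_eq_smul (α := N) fun z => ?_)
    rw [hall z, zero_smul]
  obtain ⟨z, hEz⟩ := hz
  have hEzmem : E • z ∈ Msub := by
    show E • (E • z) = E • z
    rw [← mul_smul, hEE]
  refine isPrimitiveRing_of_module (↥Msub) ?_ ?_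
  · rw [gcr_simple_iff_cyclic]
    constructor
    · exact ⟨⟨E • z, hEzmem⟩, fun h0 => hEz (congrArg Subtype.val h0)⟩
    · rintro ⟨x, hx⟩ hxne ⟨y, hy⟩
      obtain ⟨_, hcN⟩ := gcr_simple_iff_cyclic.mp hs
      have hxN : x ≠ 0 := fun h0 => hxne (Subtype.ext h0)
      obtain ⟨A, hA⟩ := hcN x hxN y
      refine ⟨A i₀ i₀, Subtype.ext ?_⟩
      show (Matrix.scalar n (A i₀ i₀)) • x = y
      have hxfix : E • x = x := hx
      have hyfix : E • y = y := hy
      calc (Matrix.scalar n (A i₀ i₀)) • x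
          = (Matrix.scalar n (A i₀ i₀) * E) • x := by
            rw [mul_smul (Matrix.scalar n (A i₀ i₀)) E x, hxfix]
        _ = Matrix.single i₀ i₀ (A i₀ i₀) • x := by rw [gcr_scalarE]
        _ = (E * A * E) • x := by rw [gcr_EAE]
        _ = E • (A • (E • x)) := by rw [← mul_smul, ← mul_smul]
        _ = E • (A • x) := by rw [hxfix]
        _ = E • y := by rw [hA]
        _ = y := hyfix
  · refine ⟨fun {s₁ s₂} h => ?_⟩
    have key : ∀ w : N, Matrix.single i₀ i₀ s₁ • w = Matrix.single i₀ i₀ s₂ • w := by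
      intro w
      have hmem : E • w ∈ Msub := by show E • (E • w) = E • w; rw [← mul_smul, hEE]
      have := congrArg Subtype.val (h ⟨E • w, hmem⟩)
      have h2 : (Matrix.scalar n s₁) • (E • w) = (Matrix.scalar n s₂) • (E • w) := this
      rw [← mul_smul, ← mul_smul, gcr_scalarE, gcr_scalarE] at h2
      exact h2
    have := hfN.eq_of_smul_eq_smul (α := N) key
    have := congrFun (congrFun this i₀) i₀
    rwa [Matrix.single_apply_same, Matrix.single_apply_same] at this

end MatPrim

section Quot
variable {R : Type u} [Ring R] {n : Type v} [Fintype n] [DecidableEq n]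

/-- Quotient of the matrix ring by `Mₙ(I)` is matrices over `R/I`. -/
noncomputable def gcrQuotEquiv (I : TwoSidedIdeal R) :
    (I.matrix n).ringCon.Quotient ≃+* Matrix n n I.ringCon.Quotient := by
  let g : Matrix n n R →+* Matrix n n I.ringCon.Quotient :=
    (I.ringCon.mk').mapMatrix
  have hg : ∀ (A : Matrix n n R) (i j : n), g A i j = I.ringCon.mk' (A i j) := by
    intro A i j
    simp [g, RingHom.mapMatrix_apply, Matrix.map_apply]
  have wd : ∀ a b : Matrix n n R, ((I.matrix n).ringCon) a b → g a = g b := by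
    intro a b hab
    rw [TwoSidedIdeal.rel_iff] at hab
    rw [TwoSidedIdeal.mem_matrix] at hab
    ext i j
    rw [hg, hg]
    have : I.ringCon (a i j) (b i j) := by
      rw [TwoSidedIdeal.rel_iff]
      exact hab i j
    exact (RingCon.eq _).mpr this
  let φ : (I.matrix n).ringCon.Quotient →+* Matrix n n I.ringCon.Quotient :=
  { toFun := fun q => Quotient.liftOn' q g wd
    map_one' := map_one g
    map_mul' := fun a b => Quotient.inductionOn₂' a b fun x y => map_mul g x y
    map_zero' := map_zero g
    map_add' := fun a b => Quotient.inductionOn₂' a b fun x y => map_add g x y }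
  have hφ : ∀ A : Matrix n n R, φ ((I.matrix n).ringCon.mk' A) = g A := fun A => rfl
  refine RingEquiv.ofBijective φ ⟨?_, ?_⟩
  · intro a b hab
    induction a using Quotient.inductionOn' with | h x =>
    induction b using Quotient.inductionOn' with | h y =>
    have hxy : g x = g y := hab
    refine Quotient.sound' ?_
    show ((I.matrix n).ringCon) x y
    rw [TwoSidedIdeal.rel_iff, TwoSidedIdeal.mem_matrix]
    intro i j
    have hentry : g x i j = g y i j := by rw [hxy]
    rw [hg, hg] at hentry
    have h2 : I.ringCon (x i j) (y i j) := (RingCon.eq _).mp hentry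
    rw [TwoSidedIdeal.rel_iff] at h2
    exact h2
  · intro B
    refine ⟨(I.matrix n).ringCon.mk' (Matrix.of fun i j => Quotient.out (B i j)), ?_⟩
    rw [hφ]
    ext i j
    rw [hg]
    show Quotient.mk'' (Quotient.out (B i j)) = B i j
    exact Quotient.out_eq' _

end Quot

/-- Let `R` be a unital ring and `n` a nonempty finite index type.  Then `R` is GCR if and
only if the ring of `n × n` matrices over `R` is GCR. -/
theorem isGCRRing_matrix_iff (R : Type u) [Ring R] (n : Type v) [Fintype n] [Nonempty n]
    [DecidableEq n] :
    IsGCRRing R ↔ IsGCRRing (Matrix n n R) := by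
  obtain ⟨i₀⟩ := ‹Nonempty n›
  constructor
  · intro h P hP
    obtain ⟨I, rfl⟩ : ∃ I : TwoSidedIdeal R, I.matrix n = P :=
      ⟨TwoSidedIdeal.equivMatrix.symm P, by
        rw [← TwoSidedIdeal.equivMatrix_apply]
        exact TwoSidedIdeal.equivMatrix.apply_symm_apply P⟩
    have e := gcrQuotEquiv (n := n) I
    have hprimM : IsPrimitiveRing (Matrix n n I.ringCon.Quotient) :=
      isPrimitiveRing_of_ringEquiv e.symm hP
    have hprim : IsPrimitiveRing I.ringCon.Quotient := prim_matrix_down hprimM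
    exact hml_of_ringEquiv e (hml_matrix_up (h I hprim))
  · intro h I hI
    have e := gcrQuotEquiv (n := n) I
    have hprimM : IsPrimitiveRing (Matrix n n I.ringCon.Quotient) := prim_matrix_up hI
    have hprimQ : IsPrimitiveRing ((I.matrix n).ringCon.Quotient) :=
      isPrimitiveRing_of_ringEquiv e hprimM
    have hml := h (I.matrix n) hprimQ
    exact hml_matrix_down (hml_of_ringEquiv e.symm hml)
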